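/- Let σ be a rational polyhedral cone in ℝ^n (an intersection of finitely many rational half-spaces through the origin). Then the semigroup S = σ ∩ ℤ^n is finitely generated as an additive semigroup (Gordan's lemma). -/
import Mathlib

theorem gordan_lemma
    {n : ℕ} (s : Finset (Fin n → ℤ)) :
    ∃ T : Finset (Fin n → ℤ),
      (AddSubmonoid.closure (T : Set (Fin n → ℤ)) : Set (Fin n → ℤ)) =
        {m : Fin n → ℤ | ∃ r : (Fin n → ℤ) → ℝ, (∀ v, 0 ≤ r v) ∧
          (fun j => (m j : ℝ)) = ∑ v ∈ s, r v • (fun j => (v j : ℝ))} := by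
  classical
  set c : (Fin n → ℤ) → (Fin n → ℝ) := fun m j => (m j : ℝ) with hc
  set C : Set (Fin n → ℤ) :=
    {m | ∃ r : (Fin n → ℤ) → ℝ, (∀ v, 0 ≤ r v) ∧ c m = ∑ v ∈ s, r v • c v} with hC
  set P : Set (Fin n → ℤ) :=
    {m | ∃ r : (Fin n → ℤ) → ℝ, (∀ v, 0 ≤ r v ∧ r v ≤ 1) ∧ c m = ∑ v ∈ s, r v • c v} with hP
  -- P is finite
  have hPfin : P.Finite := by
    set B : Fin n → ℤ := fun j => ∑ v ∈ s, |v j| with hB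
    apply Set.Finite.subset
      (Set.Finite.pi (fun j : Fin n => Set.finite_Icc (-(B j)) (B j)))
    rintro m ⟨r, hr, hm⟩ j -
    have hmj : (m j : ℝ) = ∑ v ∈ s, r v * (v j : ℝ) := by
      have := congrFun hm j
      simpa [c] using this
    have habs : |(m j : ℝ)| ≤ (B j : ℝ) := by
      rw [hmj]
      calc |∑ v ∈ s, r v * (v j : ℝ)| ≤ ∑ v ∈ s, |r v * (v j : ℝ)| :=
            Finset.abs_sum_le_sum_abs _ _
        _ ≤ ∑ v ∈ s, |(v j : ℝ)| := by
            apply Finset.sum_le_sum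
            intro v hv
            rw [abs_mul, abs_of_nonneg (hr v).1]
            calc r v * |(v j : ℝ)| ≤ 1 * |(v j : ℝ)| :=
                  mul_le_mul_of_nonneg_right (hr v).2 (abs_nonneg _)
              _ = |(v j : ℝ)| := one_mul _
        _ = (B j : ℝ) := by simp [hB]
    rw [abs_le] at habs
    constructor
    · exact_mod_cast habs.1
    · exact_mod_cast habs.2
  refine ⟨hPfin.toFinset, ?_⟩
  -- s ⊆ P
  have hsP : ∀ v ∈ s, v ∈ P := by
    intro v hv
    refine ⟨fun w => if w = v then 1 else 0, fun w => by by_cases h : w = v <;> simp [h], ?_⟩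
    rw [show (∑ w ∈ s, (if w = v then (1:ℝ) else 0) • c w)
        = ∑ w ∈ s, (if w = v then c w else 0) from
      Finset.sum_congr rfl fun w _ => by split <;> simp]
    rw [Finset.sum_ite_eq' s v (fun w => c w), if_pos hv]
  -- the cone C is an additive submonoid
  have hcsub : ∀ a b : Fin n → ℤ, c (a + b) = c a + c b := by
    intro a b; funext j; simp [c]
  have hzero : (0 : Fin n → ℤ) ∈ C := by
    refine ⟨0, fun v => le_refl 0, ?_⟩
    funext j; simp [c]
  have hadd : ∀ a ∈ C, ∀ b ∈ C, a + b ∈ C := by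
    rintro a ⟨ra, hra, ha⟩ b ⟨rb, hrb, hb⟩
    refine ⟨ra + rb, fun v => add_nonneg (hra v) (hrb v), ?_⟩
    rw [hcsub, ha, hb, ← Finset.sum_add_distrib]
    exact Finset.sum_congr rfl fun v _ => by rw [Pi.add_apply, add_smul]
  let M : AddSubmonoid (Fin n → ℤ) :=
    { carrier := C
      zero_mem' := hzero
      add_mem' := fun {a b} ha hb => hadd a ha b hb }
  -- P ⊆ C
  have hPC : P ⊆ C := by
    rintro m ⟨r, hr, hm⟩
    exact ⟨r, fun v => (hr v).1, hm⟩
  apply Set.eq_of_subset_of_subset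
  · -- closure ⊆ C
    have : AddSubmonoid.closure (↑hPfin.toFinset : Set (Fin n → ℤ)) ≤ M := by
      apply AddSubmonoid.closure_le.mpr
      intro x hx
      exact hPC (by simpa using hx)
    exact this
  · -- C ⊆ closure
    rintro m ⟨r, hr, hm⟩
    set q : (Fin n → ℤ) → ℕ := fun v => (⌊r v⌋).toNat with hq
    have hqr : ∀ v, ((q v : ℤ) : ℝ) = (⌊r v⌋ : ℝ) := by
      intro v
      have : (0:ℤ) ≤ ⌊r v⌋ := Int.floor_nonneg.mpr (hr v)
      rw [hq]; push_cast [Int.toNat_of_nonneg this]; ring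
    set p : Fin n → ℤ := m - ∑ v ∈ s, q v • v with hp
    have hpP : p ∈ P := by
      refine ⟨fun v => Int.fract (r v),
        fun v => ⟨Int.fract_nonneg _, le_of_lt (Int.fract_lt_one _)⟩, ?_⟩
      funext j
      have hmj : (m j : ℝ) = ∑ v ∈ s, r v * (v j : ℝ) := by
        have := congrFun hm j
        simpa [c] using this
      have hpj : c p j = (m j : ℝ) - ∑ v ∈ s, ((q v : ℤ) : ℝ) * (v j : ℝ) := by
        simp only [c, hp, Pi.sub_apply, Finset.sum_apply, Pi.smul_apply, smul_eq_mul]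
        push_cast [nsmul_eq_mul]
        ring
      rw [show (∑ v ∈ s, Int.fract (r v) • c v) j
          = ∑ v ∈ s, Int.fract (r v) * (v j : ℝ) from by
        simp [c, Finset.sum_apply]]
      rw [hpj, hmj, ← Finset.sum_sub_distrib]
      apply Finset.sum_congr rfl
      intro v hv
      rw [hqr v, Int.fract]
      ring
    have hmeq : m = p + ∑ v ∈ s, q v • v := by
      rw [hp]; abel
    rw [hmeq]
    apply AddSubmonoid.add_mem
    · exact AddSubmonoid.subset_closure (by simpa using hpP)
    · apply AddSubmonoid.sum_mem
      intro v hv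
      have hv' : v ∈ AddSubmonoid.closure (↑hPfin.toFinset : Set (Fin n → ℤ)) :=
        AddSubmonoid.subset_closure (by simpa using hsP v hv)
      exact AddSubmonoid.nsmul_mem _ hv' _
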